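/- If {a_n} is a sequence of nonnegative reals satisfying a_{n+1} ≤ (1 − γ_n) a_n + δ_n for all n ≥ 1, where γ_n ∈ (0,1) with ∑ γ_n = ∞, and ∑ |δ_n| < ∞, then a_n → 0. -/

import Mathlib

open Filter

theorem stmt_2 (a γ δ : ℕ → ℝ)
    (ha : ∀ n, 0 ≤ a n)
    (hγ : ∀ n, γ n ∈ Set.Ioo (0 : ℝ) 1)
    (hrec : ∀ n ≥ 1, a (n + 1) ≤ (1 - γ n) * a n + δ n)
    (hsum : Tendsto (fun N => ∑ n ∈ Finset.range N, γ n) atTop atTop)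
    (hδ : Summable fun n => |δ n|) :
    Tendsto a atTop (nhds 0) := by
  have h01 : ∀ k, 0 ≤ 1 - γ k ∧ 1 - γ k ≤ 1 := by
    intro k
    obtain ⟨h1, h2⟩ := hγ k
    constructor <;> linarith
  -- key unrolling estimate
  have key : ∀ N, 1 ≤ N → ∀ m, N ≤ m →
      a m ≤ (∏ k ∈ Finset.Ico N m, (1 - γ k)) * a N + ∑ k ∈ Finset.Ico N m, |δ k| := by
    intro N hN m hm
    induction m with
    | zero => omega
    | succ m ih =>
      rcases Nat.lt_or_ge N (m + 1) with hlt | hge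
      · have hNm : N ≤ m := Nat.lt_succ_iff.mp hlt
        have ihm := ih hNm
        have hrecm := hrec m (le_trans hN hNm)
        have hP : (0:ℝ) ≤ ∏ k ∈ Finset.Ico N m, (1 - γ k) :=
          Finset.prod_nonneg fun k _ => (h01 k).1
        have hS : (0:ℝ) ≤ ∑ k ∈ Finset.Ico N m, |δ k| :=
          Finset.sum_nonneg fun k _ => abs_nonneg _
        have h1 : a (m + 1) ≤ (1 - γ m) * ((∏ k ∈ Finset.Ico N m, (1 - γ k)) * a N
            + ∑ k ∈ Finset.Ico N m, |δ k|) + |δ m| := by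
          calc a (m + 1) ≤ (1 - γ m) * a m + δ m := hrecm
            _ ≤ (1 - γ m) * ((∏ k ∈ Finset.Ico N m, (1 - γ k)) * a N
                + ∑ k ∈ Finset.Ico N m, |δ k|) + |δ m| := by
              have := mul_le_mul_of_nonneg_left ihm (h01 m).1
              have hd : δ m ≤ |δ m| := le_abs_self _
              linarith
        rw [Finset.prod_Ico_succ_top hNm, Finset.sum_Ico_succ_top hNm]
        have h2 : (1 - γ m) * (∑ k ∈ Finset.Ico N m, |δ k|) ≤ ∑ k ∈ Finset.Ico N m, |δ k| := by
          nlinarith [(h01 m).1, (h01 m).2]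
        nlinarith [h1, h2]
      · have : N = m + 1 := le_antisymm hm hge
        subst this
        simp
  -- tail sum control
  have htail : Tendsto (fun N => ∑' k, |δ (k + N)|) atTop (nhds 0) :=
    tendsto_sum_nat_add (fun n => |δ n|)
  rw [Metric.tendsto_atTop]
  intro ε hε
  have hε2 : 0 < ε / 2 := by linarith
  obtain ⟨N₀, hN₀⟩ := (Metric.tendsto_atTop.mp htail) (ε / 2) hε2
  set N := max N₀ 1 with hNdef
  have hN1 : 1 ≤ N := le_max_right _ _
  have htailN : ∑' k, |δ (k + N)| < ε / 2 := by
    have h := hN₀ N (le_max_left _ _)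
    have hnn : 0 ≤ ∑' k, |δ (k + N)| :=
      tsum_nonneg fun k => abs_nonneg _
    rwa [Real.dist_eq, sub_zero, abs_of_nonneg hnn] at h
  -- sum over Ico bounded by tail tsum
  have hsumδ : ∀ m, N ≤ m → ∑ k ∈ Finset.Ico N m, |δ k| ≤ ∑' k, |δ (k + N)| := by
    intro m hm
    have hsummable : Summable fun k => |δ (k + N)| :=
      (summable_nat_add_iff (f := fun n => |δ n|) N).mpr hδ
    have heq : ∑ k ∈ Finset.Ico N m, |δ k|
        = ∑ k ∈ Finset.range (m - N), |δ (k + N)| := by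
      rw [Finset.sum_Ico_eq_sum_range]
      exact Finset.sum_congr rfl fun k _ => by rw [Nat.add_comm]
    rw [heq]
    exact Summable.sum_le_tsum _ (fun k _ => abs_nonneg _) hsummable
  -- product bound via exp
  have hprod : ∀ m, (∏ k ∈ Finset.Ico N m, (1 - γ k)) ≤
      Real.exp (-(∑ k ∈ Finset.Ico N m, γ k)) := by
    intro m
    calc (∏ k ∈ Finset.Ico N m, (1 - γ k))
        ≤ ∏ k ∈ Finset.Ico N m, Real.exp (-γ k) := by
          apply Finset.prod_le_prod (fun k _ => (h01 k).1)
          intro k _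
          have := Real.add_one_le_exp (-γ k)
          linarith
      _ = Real.exp (∑ k ∈ Finset.Ico N m, -γ k) := (Real.exp_sum _ _).symm
      _ = Real.exp (-(∑ k ∈ Finset.Ico N m, γ k)) := by rw [Finset.sum_neg_distrib]
  -- exp term * a N tends to 0
  have hIco : Tendsto (fun m => ∑ k ∈ Finset.Ico N m, γ k) atTop atTop := by
    have : ∀ m, N ≤ m → ∑ k ∈ Finset.Ico N m, γ k
        = (∑ k ∈ Finset.range m, γ k) - ∑ k ∈ Finset.range N, γ k := by
      intro m hm
      rw [Finset.sum_Ico_eq_sub _ hm]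
    apply Tendsto.congr' _ (hsum.atTop_add tendsto_const_nhds (C := -(∑ k ∈ Finset.range N, γ k)))
    filter_upwards [eventually_ge_atTop N] with m hm
    rw [this m hm]; ring
  have hexp : Tendsto (fun m => Real.exp (-(∑ k ∈ Finset.Ico N m, γ k)) * a N)
      atTop (nhds 0) := by
    have h1 : Tendsto (fun m => Real.exp (-(∑ k ∈ Finset.Ico N m, γ k))) atTop (nhds 0) :=
      Real.tendsto_exp_atBot.comp (tendsto_neg_atBot_iff.mpr hIco)
    simpa using h1.mul_const (a N)
  obtain ⟨M₀, hM₀⟩ := (Metric.tendsto_atTop.mp hexp) (ε / 2) hε2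
  refine ⟨max M₀ N, fun n hn => ?_⟩
  have hnM₀ : M₀ ≤ n := le_trans (le_max_left _ _) hn
  have hnN : N ≤ n := le_trans (le_max_right _ _) hn
  have hb := key N hN1 n hnN
  have hexpn := hM₀ n hnM₀
  rw [Real.dist_eq, sub_zero] at hexpn
  have hexpnn : 0 ≤ Real.exp (-(∑ k ∈ Finset.Ico N n, γ k)) * a N :=
    mul_nonneg (Real.exp_pos _).le (ha N)
  rw [abs_of_nonneg hexpnn] at hexpn
  have hP : (∏ k ∈ Finset.Ico N n, (1 - γ k)) * a N
      ≤ Real.exp (-(∑ k ∈ Finset.Ico N n, γ k)) * a N :=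
    mul_le_mul_of_nonneg_right (hprod n) (ha N)
  rw [Real.dist_eq, sub_zero, abs_of_nonneg (ha n)]
  calc a n ≤ (∏ k ∈ Finset.Ico N n, (1 - γ k)) * a N + ∑ k ∈ Finset.Ico N n, |δ k| := hb
    _ < ε / 2 + ε / 2 := by
        have := hsumδ n hnN
        linarith
    _ = ε := by ring
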